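/- Deterministic core of the hybrid error bound with spectral norms (d = 3, t = 1): under the assumptions of the previous statement, ‖A - Â‖_F² ≤ n₁ ‖E‖₂² + n₂ ‖H₂‖₂² + n₃ ‖H₃‖₂², where ‖·‖₂ denotes the spectral norm of the matrix. -/

import Mathlib

open Matrix

/-- Frobenius norm of a real matrix. -/
noncomputable def frobNorm {α β : Type*} [Fintype α] [Fintype β]
    (A : Matrix α β ℝ) : ℝ := Real.sqrt (∑ i, ∑ j, (A i j) ^ 2)

/-- Squared Frobenius norm of a real matrix. -/
noncomputable def frobSq {α β : Type*} [Fintype α] [Fintype β]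
    (A : Matrix α β ℝ) : ℝ := ∑ i, ∑ j, (A i j) ^ 2

/-- Spectral norm (largest singular value) of a real matrix: the operator norm
of the induced linear map between Euclidean spaces. -/
noncomputable def specNorm {α β : Type*} [Fintype α] [Fintype β] [DecidableEq α] [DecidableEq β]
    (A : Matrix α β ℝ) : ℝ :=
  ‖LinearMap.toContinuousLinearMap (Matrix.toEuclideanLin A)‖

/-- Moore–Penrose pseudoinverse of a full-column-rank matrix: `C⁺ = (CᵀC)⁻¹Cᵀ`. -/
noncomputable def pinv {m k : ℕ} (C : Matrix (Fin m) (Fin k) ℝ) : Matrix (Fin k) (Fin m) ℝ :=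
  (Cᵀ * C)⁻¹ * Cᵀ

/-- Mode-1 product of an order-3 tensor with a matrix. -/
def mode1 {n₁ n₂ n₃ m : ℕ} (U : Matrix (Fin m) (Fin n₁) ℝ)
    (X : Fin n₁ × Fin n₂ × Fin n₃ → ℝ) : Fin m × Fin n₂ × Fin n₃ → ℝ :=
  fun p => ∑ j, U p.1 j * X (j, p.2.1, p.2.2)

/-- Mode-2 product of an order-3 tensor with a matrix. -/
def mode2 {n₁ n₂ n₃ m : ℕ} (V : Matrix (Fin m) (Fin n₂) ℝ)
    (X : Fin n₁ × Fin n₂ × Fin n₃ → ℝ) : Fin n₁ × Fin m × Fin n₃ → ℝ :=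
  fun p => ∑ k, V p.2.1 k * X (p.1, k, p.2.2)

/-- Mode-3 product of an order-3 tensor with a matrix. -/
def mode3 {n₁ n₂ n₃ m : ℕ} (W : Matrix (Fin m) (Fin n₃) ℝ)
    (X : Fin n₁ × Fin n₂ × Fin n₃ → ℝ) : Fin n₁ × Fin n₂ × Fin m → ℝ :=
  fun p => ∑ l, W p.2.2 l * X (p.1, p.2.1, l)

/-- Mode-1 unfolding of an order-3 tensor. -/
def unfold1 {n₁ n₂ n₃ : ℕ} (X : Fin n₁ × Fin n₂ × Fin n₃ → ℝ) :
    Matrix (Fin n₁) (Fin n₂ × Fin n₃) ℝ := Matrix.of fun j p => X (j, p.1, p.2)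

/-- Mode-2 unfolding of an order-3 tensor. -/
def unfold2 {n₁ n₂ n₃ : ℕ} (X : Fin n₁ × Fin n₂ × Fin n₃ → ℝ) :
    Matrix (Fin n₂) (Fin n₁ × Fin n₃) ℝ := Matrix.of fun k p => X (p.1, k, p.2)

/-- Mode-3 unfolding of an order-3 tensor. -/
def unfold3 {n₁ n₂ n₃ : ℕ} (X : Fin n₁ × Fin n₂ × Fin n₃ → ℝ) :
    Matrix (Fin n₃) (Fin n₁ × Fin n₂) ℝ := Matrix.of fun l p => X (p.1, p.2, l)

/-- Frobenius norm of an order-3 tensor. -/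
noncomputable def tnorm {n₁ n₂ n₃ : ℕ} (X : Fin n₁ × Fin n₂ × Fin n₃ → ℝ) : ℝ :=
  Real.sqrt (∑ p, (X p) ^ 2)

/-- Squared Frobenius norm of an order-3 tensor. -/
noncomputable def tSq {n₁ n₂ n₃ : ℕ} (X : Fin n₁ × Fin n₂ × Fin n₃ → ℝ) : ℝ :=
  ∑ p, (X p) ^ 2

section AuxMatrix

variable {ι κ : Type*} [Fintype ι] [Fintype κ]

lemma frobSq_nonneg (M : Matrix ι κ ℝ) : 0 ≤ frobSq M :=
  Finset.sum_nonneg fun _ _ => Finset.sum_nonneg fun _ _ => sq_nonneg _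

lemma frobSq_eq_trace (M : Matrix ι κ ℝ) : frobSq M = Matrix.trace (Mᵀ * M) := by
  unfold frobSq Matrix.trace
  rw [Finset.sum_comm]
  simp [Matrix.mul_apply, Matrix.diag, sq]

lemma frob_decomp (P : Matrix ι ι ℝ) (hPt : Pᵀ = P) (hPP : P * P = P)
    (M N : Matrix ι κ ℝ) :
    frobSq (M - P * M + P * N) = frobSq (M - P * M) + frobSq (P * N) := by
  have hX : (M - P * M)ᵀ * (P * N) = 0 := by
    rw [transpose_sub, transpose_mul, hPt, Matrix.sub_mul, Matrix.mul_assoc,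
      ← Matrix.mul_assoc P P N, hPP, sub_self]
  have hXt : (P * N)ᵀ * (M - P * M) = 0 := by
    have := congrArg Matrix.transpose hX
    simpa [Matrix.transpose_mul] using this
  rw [frobSq_eq_trace, frobSq_eq_trace, frobSq_eq_trace]
  rw [transpose_add, Matrix.add_mul, Matrix.mul_add, Matrix.mul_add, hX, hXt]
  simp [Matrix.trace_add]

lemma frobSq_split (P : Matrix ι ι ℝ) (hPt : Pᵀ = P) (hPP : P * P = P)
    (N : Matrix ι κ ℝ) : frobSq N = frobSq (N - P * N) + frobSq (P * N) := by
  have h := frob_decomp P hPt hPP N N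
  rwa [sub_add_cancel] at h

lemma frobSq_proj_le (P : Matrix ι ι ℝ) (hPt : Pᵀ = P) (hPP : P * P = P)
    (N : Matrix ι κ ℝ) : frobSq (P * N) ≤ frobSq N := by
  rw [frobSq_split P hPt hPP N]
  linarith [frobSq_nonneg (N - P * N)]

lemma frobSq_sub_proj_le (P : Matrix ι ι ℝ) (hPt : Pᵀ = P) (hPP : P * P = P)
    (N : Matrix ι κ ℝ) : frobSq (N - P * N) ≤ frobSq N := by
  rw [frobSq_split P hPt hPP N]
  linarith [frobSq_nonneg (P * N)]

variable [DecidableEq ι] [DecidableEq κ]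

lemma coord_le_norm (x : EuclideanSpace ℝ ι) (i : ι) : |x i| ≤ ‖x‖ := by
  rw [EuclideanSpace.norm_eq]
  refine (Real.le_sqrt (abs_nonneg _) (Finset.sum_nonneg fun _ _ => sq_nonneg _)).mpr ?_
  rw [sq_abs]
  calc x i ^ 2 = ‖x i‖ ^ 2 := by simp [Real.norm_eq_abs, sq_abs]
  _ ≤ ∑ j, ‖x j‖ ^ 2 :=
      Finset.single_le_sum (f := fun j => ‖x j‖ ^ 2) (fun j _ => sq_nonneg _) (Finset.mem_univ i)

lemma row_bound (M : Matrix ι κ ℝ) (i : ι) :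
    ∑ j, (M i j) ^ 2 ≤ specNorm M ^ 2 := by
  set s := ∑ j, (M i j) ^ 2 with hs_def
  have hs : 0 ≤ s := Finset.sum_nonneg fun _ _ => sq_nonneg _
  set v : EuclideanSpace ℝ κ := (WithLp.equiv 2 _).symm (fun j => M i j) with hv_def
  have hv : ‖v‖ = Real.sqrt s := by
    rw [EuclideanSpace.norm_eq]
    congr 1
    refine Finset.sum_congr rfl fun j _ => ?_
    simp [hv_def, Real.norm_eq_abs, sq_abs, WithLp.equiv_symm_apply, PiLp.toLp_apply]
  have happ : Matrix.toEuclideanLin M v = (WithLp.equiv 2 _).symm (M *ᵥ fun j => M i j) :=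
    Matrix.toEuclideanLin_apply_piLp_toLp M _
  have hcoord : (Matrix.toEuclideanLin M v) i = s := by
    rw [happ]
    simp [WithLp.equiv_symm_apply, PiLp.toLp_apply, Matrix.mulVec, dotProduct, sq, hs_def]
  have h1 : s ≤ ‖Matrix.toEuclideanLin M v‖ := by
    rw [← hcoord]
    exact le_trans (le_abs_self _) (coord_le_norm _ i)
  have h2 : ‖Matrix.toEuclideanLin M v‖ ≤ specNorm M * ‖v‖ := by
    have := (LinearMap.toContinuousLinearMap (Matrix.toEuclideanLin M)).le_opNorm v
    simpa [specNorm] using this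
  have h3 : s ≤ specNorm M * Real.sqrt s := by rw [← hv]; exact le_trans h1 h2
  rcases eq_or_lt_of_le hs with h | h
  · rw [← h]; positivity
  · have hsqrt : Real.sqrt s ≤ specNorm M := by
      have hpos : 0 < Real.sqrt s := Real.sqrt_pos.mpr h
      have : Real.sqrt s * Real.sqrt s ≤ specNorm M * Real.sqrt s := by
        rwa [Real.mul_self_sqrt hs]
      exact le_of_mul_le_mul_right this hpos
    calc s = Real.sqrt s ^ 2 := (Real.sq_sqrt hs).symm
    _ ≤ specNorm M ^ 2 := pow_le_pow_left₀ (Real.sqrt_nonneg _) hsqrt 2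

lemma frobSq_le_card (M : Matrix ι κ ℝ) :
    frobSq M ≤ (Fintype.card ι : ℝ) * specNorm M ^ 2 := by
  unfold frobSq
  calc ∑ i, ∑ j, (M i j) ^ 2 ≤ ∑ _i : ι, specNorm M ^ 2 :=
        Finset.sum_le_sum fun i _ => row_bound M i
  _ = (Fintype.card ι : ℝ) * specNorm M ^ 2 := by
        simp [Finset.sum_const, nsmul_eq_mul]

end AuxMatrix

section AuxTensor

variable {n₁ n₂ n₃ m : ℕ}

lemma tSq_unfold1 (X : Fin n₁ × Fin n₂ × Fin n₃ → ℝ) : tSq X = frobSq (unfold1 X) := by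
  unfold tSq frobSq unfold1
  rw [Fintype.sum_prod_type]
  rfl

lemma tSq_unfold2 (X : Fin n₁ × Fin n₂ × Fin n₃ → ℝ) : tSq X = frobSq (unfold2 X) := by
  unfold tSq frobSq unfold2
  simp only [Matrix.of_apply, Fintype.sum_prod_type]
  exact Finset.sum_comm

lemma tSq_unfold3 (X : Fin n₁ × Fin n₂ × Fin n₃ → ℝ) : tSq X = frobSq (unfold3 X) := by
  unfold tSq frobSq unfold3
  simp only [Matrix.of_apply, Fintype.sum_prod_type]
  trans (∑ i : Fin n₁, ∑ l : Fin n₃, ∑ k : Fin n₂, X (i, k, l) ^ 2)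
  · exact Finset.sum_congr rfl fun i _ => Finset.sum_comm
  · exact Finset.sum_comm

lemma unfold1_mode1 (M : Matrix (Fin n₁) (Fin n₁) ℝ) (X : Fin n₁ × Fin n₂ × Fin n₃ → ℝ) :
    unfold1 (mode1 M X) = M * unfold1 X := by
  ext i p
  simp [unfold1, mode1, Matrix.mul_apply]

lemma unfold2_mode2 (M : Matrix (Fin n₂) (Fin n₂) ℝ) (X : Fin n₁ × Fin n₂ × Fin n₃ → ℝ) :
    unfold2 (mode2 M X) = M * unfold2 X := by
  ext k p
  simp [unfold2, mode2, Matrix.mul_apply]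

lemma unfold3_mode3 (M : Matrix (Fin n₃) (Fin n₃) ℝ) (X : Fin n₁ × Fin n₂ × Fin n₃ → ℝ) :
    unfold3 (mode3 M X) = M * unfold3 X := by
  ext l p
  simp [unfold3, mode3, Matrix.mul_apply]

lemma unfold1_sub (X Y : Fin n₁ × Fin n₂ × Fin n₃ → ℝ) :
    unfold1 (X - Y) = unfold1 X - unfold1 Y := rfl

lemma unfold1_add (X Y : Fin n₁ × Fin n₂ × Fin n₃ → ℝ) :
    unfold1 (X + Y) = unfold1 X + unfold1 Y := rfl

lemma unfold2_sub (X Y : Fin n₁ × Fin n₂ × Fin n₃ → ℝ) :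
    unfold2 (X - Y) = unfold2 X - unfold2 Y := rfl

lemma unfold2_add (X Y : Fin n₁ × Fin n₂ × Fin n₃ → ℝ) :
    unfold2 (X + Y) = unfold2 X + unfold2 Y := rfl

lemma unfold3_sub (X Y : Fin n₁ × Fin n₂ × Fin n₃ → ℝ) :
    unfold3 (X - Y) = unfold3 X - unfold3 Y := rfl

lemma mode1_sub {k : ℕ} (M : Matrix (Fin k) (Fin n₁) ℝ) (X Y : Fin n₁ × Fin n₂ × Fin n₃ → ℝ) :
    mode1 M (X - Y) = mode1 M X - mode1 M Y := by
  funext p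
  simp [mode1, Pi.sub_apply, mul_sub, Finset.sum_sub_distrib]

lemma mode2_sub {k : ℕ} (M : Matrix (Fin k) (Fin n₂) ℝ) (X Y : Fin n₁ × Fin n₂ × Fin n₃ → ℝ) :
    mode2 M (X - Y) = mode2 M X - mode2 M Y := by
  funext p
  simp [mode2, Pi.sub_apply, mul_sub, Finset.sum_sub_distrib]

lemma mode1_mode1 {k l : ℕ} (M : Matrix (Fin k) (Fin l) ℝ) (N : Matrix (Fin l) (Fin n₁) ℝ)
    (X : Fin n₁ × Fin n₂ × Fin n₃ → ℝ) :
    mode1 M (mode1 N X) = mode1 (M * N) X := by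
  funext p
  simp only [mode1, Matrix.mul_apply, Finset.mul_sum, Finset.sum_mul]
  rw [Finset.sum_comm]
  simp [mul_assoc]

lemma mode2_mode2 {k l : ℕ} (M : Matrix (Fin k) (Fin l) ℝ) (N : Matrix (Fin l) (Fin n₂) ℝ)
    (X : Fin n₁ × Fin n₂ × Fin n₃ → ℝ) :
    mode2 M (mode2 N X) = mode2 (M * N) X := by
  funext p
  simp only [mode2, Matrix.mul_apply, Finset.mul_sum, Finset.sum_mul]
  rw [Finset.sum_comm]
  simp [mul_assoc]

lemma mode3_mode3 {k l : ℕ} (M : Matrix (Fin k) (Fin l) ℝ) (N : Matrix (Fin l) (Fin n₃) ℝ)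
    (X : Fin n₁ × Fin n₂ × Fin n₃ → ℝ) :
    mode3 M (mode3 N X) = mode3 (M * N) X := by
  funext p
  simp only [mode3, Matrix.mul_apply, Finset.mul_sum, Finset.sum_mul]
  rw [Finset.sum_comm]
  simp [mul_assoc]

lemma mode2_mode1 {k l : ℕ} (M : Matrix (Fin k) (Fin n₂) ℝ) (N : Matrix (Fin l) (Fin n₁) ℝ)
    (X : Fin n₁ × Fin n₂ × Fin n₃ → ℝ) :
    mode2 M (mode1 N X) = mode1 N (mode2 M X) := by
  funext p
  simp only [mode1, mode2, Finset.mul_sum]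
  rw [Finset.sum_comm]
  exact Finset.sum_congr rfl fun a _ => Finset.sum_congr rfl fun b _ => by ring

lemma mode3_mode1 {k l : ℕ} (M : Matrix (Fin k) (Fin n₃) ℝ) (N : Matrix (Fin l) (Fin n₁) ℝ)
    (X : Fin n₁ × Fin n₂ × Fin n₃ → ℝ) :
    mode3 M (mode1 N X) = mode1 N (mode3 M X) := by
  funext p
  simp only [mode1, mode3, Finset.mul_sum]
  rw [Finset.sum_comm]
  exact Finset.sum_congr rfl fun a _ => Finset.sum_congr rfl fun b _ => by ring

lemma mode3_mode2 {k l : ℕ} (M : Matrix (Fin k) (Fin n₃) ℝ) (N : Matrix (Fin l) (Fin n₂) ℝ)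
    (X : Fin n₁ × Fin n₂ × Fin n₃ → ℝ) :
    mode3 M (mode2 N X) = mode2 N (mode3 M X) := by
  funext p
  simp only [mode2, mode3, Finset.mul_sum]
  rw [Finset.sum_comm]
  exact Finset.sum_congr rfl fun a _ => Finset.sum_congr rfl fun b _ => by ring

end AuxTensor


theorem stmt13 {n₁ n₂ n₃ r₁ r₂ r₃ : ℕ} (A : Fin n₁ × Fin n₂ × Fin n₃ → ℝ)
    (C : Matrix (Fin n₁) (Fin r₁) ℝ) (B : Matrix (Fin r₁) (Fin n₂ × Fin n₃) ℝ)
    (E : Matrix (Fin n₁) (Fin n₂ × Fin n₃) ℝ)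
    (U₂ : Matrix (Fin n₂) (Fin r₂) ℝ) (S₂ : Matrix (Fin r₂) (Fin r₂) ℝ)
    (V₂ : Matrix (Fin n₁ × Fin n₃) (Fin r₂) ℝ) (H₂ : Matrix (Fin n₂) (Fin n₁ × Fin n₃) ℝ)
    (U₃ : Matrix (Fin n₃) (Fin r₃) ℝ) (S₃ : Matrix (Fin r₃) (Fin r₃) ℝ)
    (V₃ : Matrix (Fin n₁ × Fin n₂) (Fin r₃) ℝ) (H₃ : Matrix (Fin n₃) (Fin n₁ × Fin n₂) ℝ)
    (hrank : C.rank = r₁) (hA1 : unfold1 A = C * B + E)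
    (hU₂ : U₂ᵀ * U₂ = 1) (hV₂ : V₂ᵀ * V₂ = 1) (hA2 : unfold2 A = U₂ * S₂ * V₂ᵀ + H₂)
    (hU₃ : U₃ᵀ * U₃ = 1) (hV₃ : V₃ᵀ * V₃ = 1) (hA3 : unfold3 A = U₃ * S₃ * V₃ᵀ + H₃) :
    tSq (A - mode3 U₃ (mode2 U₂ (mode1 C
        (mode3 U₃ᵀ (mode2 U₂ᵀ (mode1 (pinv C) A)))))) ≤
      (n₁ : ℝ) * specNorm E ^ 2 + (n₂ : ℝ) * specNorm H₂ ^ 2 + (n₃ : ℝ) * specNorm H₃ ^ 2 := by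
    classical
  -- invertibility of CᵀC
  have hdet : IsUnit (Cᵀ * C).det := by
    have h1 : (Cᵀ * C).rank = r₁ := by rw [Matrix.rank_transpose_mul_self, hrank]
    have h2 : LinearMap.range (Cᵀ * C).mulVecLin = ⊤ := by
      apply Submodule.eq_top_of_finrank_eq
      rw [show Module.finrank ℝ ↥(LinearMap.range (Cᵀ * C).mulVecLin) = (Cᵀ * C).rank from rfl,
        h1, Module.finrank_fin_fun]
    have hsurj : Function.Surjective ((Cᵀ * C).mulVec) := by
      have := LinearMap.range_eq_top.mp h2
      simpa only [Matrix.coe_mulVecLin] using this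
    have hu : IsUnit (Cᵀ * C) := Matrix.mulVec_surjective_iff_isUnit.mp hsurj
    exact (Matrix.isUnit_iff_isUnit_det _).mp hu
  have hCpC : pinv C * C = 1 := by
    unfold pinv
    rw [Matrix.mul_assoc]
    exact Matrix.nonsing_inv_mul _ hdet
  set P₁ : Matrix (Fin n₁) (Fin n₁) ℝ := C * pinv C with hP₁def
  set P₂ : Matrix (Fin n₂) (Fin n₂) ℝ := U₂ * U₂ᵀ with hP₂def
  set P₃ : Matrix (Fin n₃) (Fin n₃) ℝ := U₃ * U₃ᵀ with hP₃def
  have hP₁t : P₁ᵀ = P₁ := by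
    rw [hP₁def]
    unfold pinv
    rw [Matrix.transpose_mul, Matrix.transpose_mul, Matrix.transpose_nonsing_inv,
      Matrix.transpose_mul, Matrix.transpose_transpose, Matrix.mul_assoc]
  have hP₁P₁ : P₁ * P₁ = P₁ := by
    rw [hP₁def, Matrix.mul_assoc, ← Matrix.mul_assoc (pinv C) C (pinv C), hCpC, Matrix.one_mul]
  have hP₁C : P₁ * C = C := by
    rw [hP₁def, Matrix.mul_assoc, hCpC, Matrix.mul_one]
  have hP₂t : P₂ᵀ = P₂ := by
    rw [hP₂def, Matrix.transpose_mul, Matrix.transpose_transpose]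
  have hP₂P₂ : P₂ * P₂ = P₂ := by
    rw [hP₂def, Matrix.mul_assoc, ← Matrix.mul_assoc U₂ᵀ U₂ U₂ᵀ, hU₂, Matrix.one_mul]
  have hP₂U : P₂ * (U₂ * S₂ * V₂ᵀ) = U₂ * S₂ * V₂ᵀ := by
    rw [hP₂def]
    simp only [Matrix.mul_assoc]
    rw [← Matrix.mul_assoc U₂ᵀ U₂, hU₂, Matrix.one_mul]
  have hP₃t : P₃ᵀ = P₃ := by
    rw [hP₃def, Matrix.transpose_mul, Matrix.transpose_transpose]
  have hP₃P₃ : P₃ * P₃ = P₃ := by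
    rw [hP₃def, Matrix.mul_assoc, ← Matrix.mul_assoc U₃ᵀ U₃ U₃ᵀ, hU₃, Matrix.one_mul]
  have hP₃U : P₃ * (U₃ * S₃ * V₃ᵀ) = U₃ * S₃ * V₃ᵀ := by
    rw [hP₃def]
    simp only [Matrix.mul_assoc]
    rw [← Matrix.mul_assoc U₃ᵀ U₃, hU₃, Matrix.one_mul]
  -- rewrite the approximation as a mode-wise projection
  have hhat : mode3 U₃ (mode2 U₂ (mode1 C (mode3 U₃ᵀ (mode2 U₂ᵀ (mode1 (pinv C) A)))))
      = mode1 P₁ (mode2 P₂ (mode3 P₃ A)) := by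
    simp only [mode2_mode1, mode3_mode1, mode3_mode2, mode1_mode1, mode2_mode2, mode3_mode3,
      ← hP₁def, ← hP₂def, ← hP₃def]
  rw [hhat]
  -- first splitting
  have key1 : A - mode1 P₁ (mode2 P₂ (mode3 P₃ A))
      = (A - mode1 P₁ A) + mode1 P₁ (A - mode2 P₂ (mode3 P₃ A)) := by
    rw [mode1_sub]; abel
  rw [key1]
  have e1 : tSq ((A - mode1 P₁ A) + mode1 P₁ (A - mode2 P₂ (mode3 P₃ A)))
      = frobSq (unfold1 A - P₁ * unfold1 A + P₁ * unfold1 (A - mode2 P₂ (mode3 P₃ A))) := by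
    rw [tSq_unfold1, unfold1_add, unfold1_sub, unfold1_mode1, unfold1_mode1]
  rw [e1, frob_decomp P₁ hP₁t hP₁P₁]
  -- bound on the first term
  have hfirst : unfold1 A - P₁ * unfold1 A = E - P₁ * E := by
    rw [hA1, Matrix.mul_add, ← Matrix.mul_assoc, hP₁C]; abel
  have bound1 : frobSq (unfold1 A - P₁ * unfold1 A) ≤ (n₁ : ℝ) * specNorm E ^ 2 := by
    rw [hfirst]
    refine le_trans (frobSq_sub_proj_le P₁ hP₁t hP₁P₁ E) ?_
    simpa using frobSq_le_card E
  -- bound on the second term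
  have bound2 : frobSq (P₁ * unfold1 (A - mode2 P₂ (mode3 P₃ A)))
      ≤ tSq (A - mode2 P₂ (mode3 P₃ A)) := by
    rw [tSq_unfold1]
    exact frobSq_proj_le P₁ hP₁t hP₁P₁ _
  -- second splitting
  have key2 : A - mode2 P₂ (mode3 P₃ A) = (A - mode2 P₂ A) + mode2 P₂ (A - mode3 P₃ A) := by
    rw [mode2_sub]; abel
  have e2 : tSq (A - mode2 P₂ (mode3 P₃ A))
      = frobSq (unfold2 A - P₂ * unfold2 A + P₂ * unfold2 (A - mode3 P₃ A)) := by
    rw [key2, tSq_unfold2, unfold2_add, unfold2_sub, unfold2_mode2, unfold2_mode2]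
  have hsecond : unfold2 A - P₂ * unfold2 A = H₂ - P₂ * H₂ := by
    rw [hA2, Matrix.mul_add, hP₂U]; abel
  have bound3 : frobSq (unfold2 A - P₂ * unfold2 A) ≤ (n₂ : ℝ) * specNorm H₂ ^ 2 := by
    rw [hsecond]
    refine le_trans (frobSq_sub_proj_le P₂ hP₂t hP₂P₂ H₂) ?_
    simpa using frobSq_le_card H₂
  have bound4 : frobSq (P₂ * unfold2 (A - mode3 P₃ A)) ≤ tSq (A - mode3 P₃ A) := by
    rw [tSq_unfold2]
    exact frobSq_proj_le P₂ hP₂t hP₂P₂ _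
  -- third term
  have e3 : tSq (A - mode3 P₃ A) = frobSq (unfold3 A - P₃ * unfold3 A) := by
    rw [tSq_unfold3, unfold3_sub, unfold3_mode3]
  have hthird : unfold3 A - P₃ * unfold3 A = H₃ - P₃ * H₃ := by
    rw [hA3, Matrix.mul_add, hP₃U]; abel
  have bound5 : tSq (A - mode3 P₃ A) ≤ (n₃ : ℝ) * specNorm H₃ ^ 2 := by
    rw [e3, hthird]
    refine le_trans (frobSq_sub_proj_le P₃ hP₃t hP₃P₃ H₃) ?_
    simpa using frobSq_le_card H₃
  have bound6 : tSq (A - mode2 P₂ (mode3 P₃ A))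
      ≤ (n₂ : ℝ) * specNorm H₂ ^ 2 + (n₃ : ℝ) * specNorm H₃ ^ 2 := by
    rw [e2, frob_decomp P₂ hP₂t hP₂P₂]
    linarith
  linarith
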